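/- Let φ(z) = −4z/(z² + 2), extended to ℙ¹(ℚ) = ℚ ∪ {∞} (the denominator has no rational roots; φ(∞) = 0 since the numerator has smaller degree). Then the set of rational preperiodic points of φ is exactly {0, ∞}: 0 is a fixed point, φ(∞) = 0, and every other α ∈ ℚ has infinite forward orbit. -/

import Mathlib

/-!
The rational preperiodic points of `φ(z) = −4z/(z² + 2)` are exactly
`{0, ∞}`.

We model ℙ¹(ℚ) as `Option ℚ`, with `none` playing the role of ∞;
the denominator has no rational roots and `φ(∞) = 0`.
-/

/-- The map `φ(z) = −4z/(z² + 2)` on `ℙ¹(ℚ)`, with `φ(∞) = 0`. -/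
def phi12 : Option ℚ → Option ℚ
  | none => some 0
  | some x =>
      if x ^ 2 + 2 = 0 then none else some (-4 * x / (x ^ 2 + 2))

/-- A point is preperiodic for a self-map `f` if two distinct iterates of `f`
agree on it, i.e. its forward orbit is finite. -/
def IsPreperiodicPt {X : Type*} (f : X → X) (α : X) : Prop :=
  ∃ i j : ℕ, i < j ∧ f^[i] α = f^[j] α

noncomputable section
open padicValRat

/-- The rational version of the map. -/
def g12 (x : ℚ) : ℚ := -4 * x / (x ^ 2 + 2)

lemma denom_pos (x : ℚ) : 0 < x ^ 2 + 2 := by positivity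

lemma phi12_some (x : ℚ) : phi12 (some x) = some (g12 x) := by
  simp [phi12, g12, (denom_pos x).ne']

lemma g12_ne_zero {x : ℚ} (hx : x ≠ 0) : g12 x ≠ 0 := by
  have := (denom_pos x).ne'
  simp [g12, div_eq_zero_iff, this, hx]

lemma val_denom {x : ℚ} (hx : x ≠ 0) :
    padicValRat 2 (x ^ 2 + 2) = min (2 * padicValRat 2 x) 1 := by
  have hx2 : x ^ 2 ≠ 0 := pow_ne_zero _ hx
  have h2 : (2 : ℚ) ≠ 0 := by norm_num
  have hv2 : padicValRat 2 (2 : ℚ) = 1 := by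
    exact_mod_cast padicValRat.self (p := 2) (by norm_num)
  have hpow : padicValRat 2 (x ^ 2) = 2 * padicValRat 2 x := by
    rw [padicValRat.pow x]; push_cast; ring
  have hne : padicValRat 2 (x ^ 2) ≠ padicValRat 2 (2 : ℚ) := by
    rw [hpow, hv2]; omega
  rw [padicValRat.add_eq_min (denom_pos x).ne' hx2 h2 hne, hpow, hv2]

lemma val_g12 {x : ℚ} (hx : x ≠ 0) :
    padicValRat 2 (g12 x) = 2 + padicValRat 2 x - min (2 * padicValRat 2 x) 1 := by
  have h4 : (-4 : ℚ) * x ≠ 0 := by simp [hx]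
  have hv4 : padicValRat 2 (-4 * x : ℚ) = 2 + padicValRat 2 x := by
    rw [padicValRat.mul (by norm_num) hx, show ((-4 : ℚ)) = -(2 ^ 2) by norm_num,
      padicValRat.neg, padicValRat.pow (2 : ℚ)]
    have : padicValRat 2 (2 : ℚ) = 1 := by
      exact_mod_cast padicValRat.self (p := 2) (by norm_num)
    rw [this]; ring
  rw [g12, padicValRat.div h4 (denom_pos x).ne', hv4, val_denom hx]

lemma val_g12_ge {x : ℚ} (hx : x ≠ 0) : 1 ≤ padicValRat 2 (g12 x) := by
  rw [val_g12 hx]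
  rcases le_or_gt 1 (padicValRat 2 x) with h | h <;> omega

lemma val_g12_succ {x : ℚ} (hx : x ≠ 0) (h : 1 ≤ padicValRat 2 x) :
    padicValRat 2 (g12 x) = padicValRat 2 x + 1 := by
  rw [val_g12 hx]; omega

lemma orbit_facts {y : ℚ} (hy : y ≠ 0) (hv : 1 ≤ padicValRat 2 y) (n : ℕ) :
    g12^[n] y ≠ 0 ∧ padicValRat 2 (g12^[n] y) = padicValRat 2 y + n := by
  induction n with
  | zero => simp [hy]
  | succ n ih =>
    obtain ⟨h1, h2⟩ := ih
    have hv' : 1 ≤ padicValRat 2 (g12^[n] y) := by omega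
    rw [Function.iterate_succ_apply']
    refine ⟨g12_ne_zero h1, ?_⟩
    rw [val_g12_succ h1 hv', h2]; push_cast; ring

/-- The set of rational preperiodic points of `φ(z) = −4z/(z² + 2)` is
exactly `{0, ∞}`: `0` is fixed, `φ(∞) = 0`, and every other point has
infinite forward orbit. -/
theorem phi12_preperiodic_points :
    {α : Option ℚ | IsPreperiodicPt phi12 α} =
        ({some 0, none} : Set (Option ℚ)) ∧
      phi12 (some 0) = some 0 ∧ phi12 none = some 0 ∧
      ∀ α : Option ℚ, α ≠ some 0 → α ≠ none →
        (Set.range fun n : ℕ => phi12^[n] α).Infinite := by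
  have hfix : phi12 (some 0) = some 0 := by simp [phi12]
  have hinf : ∀ α : Option ℚ, α ≠ some 0 → α ≠ none →
      (Set.range fun n : ℕ => phi12^[n] α).Infinite := by
    intro α h0 hn
    obtain ⟨x, rfl⟩ := Option.ne_none_iff_exists'.mp hn
    have hx : x ≠ 0 := fun h => h0 (by rw [h])
    set y := g12 x with hy_def
    have hy : y ≠ 0 := g12_ne_zero hx
    have hv : 1 ≤ padicValRat 2 y := val_g12_ge hx
    have hiter : ∀ n : ℕ, phi12^[n] (some y) = some (g12^[n] y) := by
      intro n
      induction n with
      | zero => rfl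
      | succ n ih => rw [Function.iterate_succ_apply', ih,
          phi12_some, Function.iterate_succ_apply']
    have hinj : Function.Injective (fun n : ℕ => phi12^[n+1] (some x)) := by
      intro m n hmn
      simp only [Function.iterate_succ_apply, phi12_some, ← hy_def, hiter] at hmn
      have h1 := (orbit_facts hy hv m).2
      have h2 := (orbit_facts hy hv n).2
      have : g12^[m] y = g12^[n] y := by injection hmn
      rw [this, h2] at h1
      exact_mod_cast by omega
    have hsub : Set.range (fun n : ℕ => phi12^[n+1] (some x)) ⊆
        Set.range (fun n : ℕ => phi12^[n] (some x)) := by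
      rintro _ ⟨n, rfl⟩; exact ⟨n + 1, rfl⟩
    exact (Set.infinite_range_of_injective hinj).mono hsub
  refine ⟨?_, hfix, rfl, hinf⟩
  ext α
  simp only [Set.mem_setOf_eq, Set.mem_insert_iff, Set.mem_singleton_iff]
  constructor
  · intro ⟨i, j, hij, hagree⟩
    by_contra hne
    push_neg at hne
    have hfin : (Set.range fun n : ℕ => phi12^[n] α).Finite := by
      have : Set.range (fun n : ℕ => phi12^[n] α) ⊆
          (fun n : ℕ => phi12^[n] α) '' Set.Iio j := by
        rintro _ ⟨n, rfl⟩
        by_cases hn : n < j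
        · exact ⟨n, hn, rfl⟩
        · -- use eventual periodicity: f^[i] α = f^[j] α with i < j
          have key : ∀ m : ℕ, ∃ k < j, phi12^[k] α = phi12^[m] α := by
            intro m
            induction m with
            | zero => exact ⟨0, by omega, rfl⟩
            | succ m ih =>
              obtain ⟨k, hk, hkm⟩ := ih
              by_cases hkj : k + 1 < j
              · exact ⟨k + 1, hkj, by
                  rw [Function.iterate_succ_apply', Function.iterate_succ_apply', hkm]⟩
              · have hk1 : k + 1 = j := by omega
                refine ⟨i, hij, ?_⟩
                have : phi12^[m + 1] α = phi12^[j] α := by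
                  rw [Function.iterate_succ_apply', ← hkm, ← hk1,
                    Function.iterate_succ_apply']
                rw [this, ← hagree]
          obtain ⟨k, hk, hkm⟩ := key n
          exact ⟨k, hk, hkm⟩
      exact Set.Finite.subset (Set.finite_Iio j |>.image _) this
    exact hinf α hne.1 hne.2 hfin
  · rintro (rfl | rfl)
    · exact ⟨0, 1, Nat.zero_lt_one, by simp [hfix]⟩
    · refine ⟨1, 2, by norm_num, ?_⟩
      show phi12 none = phi12 (phi12 none)
      simp [phi12]
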